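/- For real γ with 0 ≤ γ < 1, we have -log((1/2)(1 + sqrt(1 - 4γ²/(2+γ)²))) ≤ 2·log(1 + γ/2) + γ³. -/
import Mathlib


theorem entropy_bound_explicit (γ : ℝ) (h0 : 0 ≤ γ) (h1 : γ < 1) :
    -Real.log ((1 / 2) * (1 + Real.sqrt (1 - 4 * γ ^ 2 / (2 + γ) ^ 2))) ≤
      2 * Real.log (1 + γ / 2) + γ ^ 3 := by
  have h2 : (0:ℝ) < 2 + γ := by linarith
  set x : ℝ := 4 * γ ^ 2 / (2 + γ) ^ 2 with hxdef
  have hx0 : 0 ≤ x := by positivity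
  have hx1 : x ≤ 1 := by
    rw [hxdef, div_le_one (by positivity)]
    nlinarith
  have hs : 1 - x ≤ Real.sqrt (1 - x) := by
    have h1x : 0 ≤ 1 - x := by linarith
    calc 1 - x = Real.sqrt ((1 - x) ^ 2) := (Real.sqrt_sq h1x).symm
      _ ≤ Real.sqrt (1 - x) := Real.sqrt_le_sqrt (by nlinarith)
  have hkey : 1 - x / 2 - 4 / (2 + γ) ^ 2 = (4 * γ - γ ^ 2) / (2 + γ) ^ 2 := by
    rw [hxdef]; field_simp; ring
  have hnum : 0 ≤ (4 * γ - γ ^ 2) / (2 + γ) ^ 2 := by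
    apply div_nonneg _ (by positivity)
    nlinarith
  have hA : 4 / (2 + γ) ^ 2 ≤ (1 / 2) * (1 + Real.sqrt (1 - x)) := by
    nlinarith [hkey, hnum, hs]
  have hApos : (0:ℝ) < 4 / (2 + γ) ^ 2 := by positivity
  have hlog : Real.log (4 / (2 + γ) ^ 2) ≤
      Real.log ((1 / 2) * (1 + Real.sqrt (1 - x))) :=
    Real.log_le_log hApos hA
  have hcalc : -Real.log (4 / (2 + γ) ^ 2) = 2 * Real.log (1 + γ / 2) := by
    rw [Real.log_div (by norm_num) (by positivity),
      show (1:ℝ) + γ / 2 = (2 + γ) / 2 by ring,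
      Real.log_div (by linarith) (by norm_num),
      show (4:ℝ) = 2 ^ 2 by norm_num, Real.log_pow, Real.log_pow]
    push_cast
    ring
  have hγ3 : 0 ≤ γ ^ 3 := by positivity
  linarith
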